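/- Comparison inequality for the asymptotic variance terms (display (A.7) in the paper). Let Σ_Z be a K×K symmetric positive definite matrix, m ≥ 1 an integer, and A ∈ ℝ^{p×K} such that there exist pairwise disjoint sets I_1,…,I_K ⊆ {1,…,p}, each of cardinality exactly m, with the property that for every ℓ and every i ∈ I_ℓ the i-th row of A equals s_i e_ℓ for some sign s_i ∈ {−1,1}. Set Θ = A Σ_Z. Then Θᵀ Θ is invertible, and for every β ∈ ℝ^K and every k ∈ {1,…,K}: Σ_{ℓ=1}^K (β_ℓ²/m) Σ_{i∈I_ℓ} ( e_kᵀ (Θᵀ Θ)^{-1} Θᵀ ẽ_i )² ≤ (‖β‖₂² / m) · e_kᵀ (Θᵀ Θ)^{-1} e_k, where ẽ_i denotes the i-th canonical basis vector of ℝ^p and e_k the k-th canonical basis vector of ℝ^K. -/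

import Mathlib

open Matrix

theorem variance_comparison {p K : ℕ}
    (S : Matrix (Fin K) (Fin K) ℝ) (hS : S.PosDef)
    (m : ℕ) (hm : 1 ≤ m)
    (A : Matrix (Fin p) (Fin K) ℝ)
    (I : Fin K → Finset (Fin p))
    (hdisj : ∀ a b, a ≠ b → Disjoint (I a) (I b))
    (hcard : ∀ k, (I k).card = m)
    (hpure : ∀ l, ∀ i ∈ I l, ∃ s : ℝ, (s = 1 ∨ s = -1) ∧
      ∀ a, A i a = if a = l then s else 0) :
    IsUnit ((A * S)ᵀ * (A * S)) ∧
    ∀ (β : Fin K → ℝ) (k : Fin K),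
      ∑ l, (β l ^ 2 / m) *
          ∑ i ∈ I l, ((((A * S)ᵀ * (A * S))⁻¹ * (A * S)ᵀ) k i) ^ 2
        ≤ ((∑ l, β l ^ 2) / m) * (((A * S)ᵀ * (A * S))⁻¹ k k) := by
  have hAinj : ∀ v : Fin K → ℝ, v ≠ 0 → A *ᵥ v ≠ 0 := by
    intro v hv hAv
    apply hv
    funext l
    obtain ⟨i, hi⟩ : ∃ i, i ∈ I l := by
      have := hcard l
      rcases Finset.card_pos.mp (by omega : 0 < (I l).card) with ⟨i, hi⟩
      exact ⟨i, hi⟩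
    obtain ⟨s, hs, hrow⟩ := hpure l i hi
    have h0 : (A *ᵥ v) i = 0 := by rw [hAv]; rfl
    have : (A *ᵥ v) i = s * v l := by
      simp only [mulVec, dotProduct, hrow]
      rw [Finset.sum_eq_single l]
      · simp
      · intro b _ hb; simp [hb]
      · simp
    rw [this] at h0
    rcases hs with rfl | rfl <;> simpa using h0
  have hΘinj : ∀ x : Fin K → ℝ, x ≠ 0 → (A * S) *ᵥ x ≠ 0 := by
    intro x hx
    rw [← mulVec_mulVec]
    apply hAinj
    exact (Matrix.mulVec_injective_iff_isUnit.mpr hS.isUnit).ne_iff' (by simp) |>.mpr hx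
  have hMpd : ((A * S)ᵀ * (A * S)).PosDef := by
    refine posDef_iff_dotProduct_mulVec.mpr ⟨?_, ?_⟩
    · have := isHermitian_conjTranspose_mul_self (A * S)
      rwa [conjTranspose_eq_transpose_of_trivial] at this
    · intro x hx
      have heq : star x ⬝ᵥ ((A * S)ᵀ * (A * S)) *ᵥ x = ((A * S) *ᵥ x) ⬝ᵥ ((A * S) *ᵥ x) := by
        rw [← mulVec_mulVec, dotProduct_mulVec, vecMul_transpose, star_trivial]
      rw [heq]
      have hne := hΘinj x hx
      simpa using dotProduct_star_self_pos_iff.mpr hne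
  refine ⟨hMpd.isUnit, ?_⟩
  intro β k
  set M := (A * S)ᵀ * (A * S) with hM
  set N := M⁻¹ with hN
  set C := N * (A * S)ᵀ with hC
  have hMdet : IsUnit M.det := (isUnit_iff_isUnit_det M).mp hMpd.isUnit
  have hNM : N * M = 1 := Matrix.nonsing_inv_mul M hMdet
  have hMt : Mᵀ = M := by
    have := hMpd.isHermitian.eq
    rwa [conjTranspose_eq_transpose_of_trivial] at this
  have hNt : Nᵀ = N := by
    rw [hN, Matrix.transpose_nonsing_inv, hMt]
  have hkey : N k k = ∑ i, (C k i) ^ 2 := by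
    have hCt : Cᵀ = (A * S) * N := by
      rw [hC, transpose_mul, transpose_transpose, hNt]
    have : C * Cᵀ = N := by
      rw [hCt, hC]
      calc N * (A * S)ᵀ * ((A * S) * N)
          = N * ((A * S)ᵀ * (A * S)) * N := by simp only [Matrix.mul_assoc]
        _ = N * M * N := by rw [hM]
        _ = N := by rw [hNM, Matrix.one_mul]
    calc N k k = (C * Cᵀ) k k := by rw [this]
      _ = ∑ i, (C k i) ^ 2 := by
          simp [Matrix.mul_apply, sq]
  -- sum over disjoint union ≤ full sum
  have hsub : ∑ l, ∑ i ∈ I l, (C k i) ^ 2 ≤ ∑ i, (C k i) ^ 2 := by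
    rw [← Finset.sum_biUnion]
    · apply Finset.sum_le_sum_of_subset_of_nonneg (Finset.subset_univ _)
      intro i _ _; positivity
    · intro a _ b _ hab; exact hdisj a b hab
  have hm0 : (0:ℝ) < m := by exact_mod_cast hm
  calc ∑ l, (β l ^ 2 / m) * ∑ i ∈ I l, (C k i) ^ 2
      ≤ ∑ l, ((∑ j, β j ^ 2) / m) * ∑ i ∈ I l, (C k i) ^ 2 := by
        apply Finset.sum_le_sum
        intro l _
        gcongr
        exact Finset.single_le_sum (f := fun j => β j ^ 2)
          (fun j _ => sq_nonneg _) (Finset.mem_univ l)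
    _ = ((∑ j, β j ^ 2) / m) * ∑ l, ∑ i ∈ I l, (C k i) ^ 2 := by
        rw [Finset.mul_sum]
    _ ≤ ((∑ j, β j ^ 2) / m) * ∑ i, (C k i) ^ 2 := by
        apply mul_le_mul_of_nonneg_left hsub
        positivity
    _ = ((∑ j, β j ^ 2) / m) * N k k := by rw [hkey]
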